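/- Let M be a finite metric space and T a finite weighted tree containing M as a subset of its vertices, with the metric on M induced from T. If every finite subset of a weighted tree admits a tree metric on that subset which is 8-equivalent to the induced metric (Gupta's theorem), then the Banach–Mazur distance between F(M) and ℓ₁^{|M|−1} is at most 8. -/

import Mathlib

open Finset

/-- The Lipschitz-free (Kantorovich–Rubinstein) norm of a molecule on a finite
metric space, expressed via duality with `1`-Lipschitz functions. -/
noncomputable def freeNorm (M : Type*) [MetricSpace M] [Fintype M] (m : M → ℝ) : ℝ :=
  sSup {r : ℝ | ∃ f : M → ℝ, LipschitzWith 1 f ∧ r = ∑ p, m p * f p}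

/-- Molecules: the underlying vector space of the Lipschitz free space on a finite space;
equipped with `freeNorm` it is the Lipschitz free space `F(M)`. -/
def molecules (M : Type*) [Fintype M] : Submodule ℝ (M → ℝ) where
  carrier := {m | ∑ p, m p = 0}
  add_mem' := by
    intro a b ha hb
    simp only [Set.mem_setOf_eq, Pi.add_apply, Finset.sum_add_distrib] at *
    rw [ha, hb]; ring
  zero_mem' := by simp
  smul_mem' := by
    intro c a ha
    simp only [Set.mem_setOf_eq, Pi.smul_apply, smul_eq_mul, ← Finset.mul_sum] at *
    rw [ha]; ring

/-- The norm of `ℓ₁^k`. -/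
def l1norm {k : ℕ} (x : Fin k → ℝ) : ℝ := ∑ i, |x i|

/-- The shortest-path distance of a positively weighted finite tree: the sum of the
weights of the edges along the unique path. -/
noncomputable def treeDist {V : Type*} (G : SimpleGraph V) (hT : G.IsTree)
    (w : Sym2 V → ℝ) (x y : V) : ℝ :=
  ((((hT.existsUnique_path x y).exists.choose).edges).map w).sum

namespace TreeAux

open SimpleGraph

variable {S : Type} [Fintype S] [DecidableEq S]

noncomputable def P (G' : SimpleGraph S) (hT : G'.IsTree) (x y : S) : G'.Walk x y :=
  (hT.existsUnique_path x y).exists.choose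

lemma P_isPath (G' : SimpleGraph S) (hT : G'.IsTree) (x y : S) : (P G' hT x y).IsPath :=
  (hT.existsUnique_path x y).exists.choose_spec

lemma P_unique {G' : SimpleGraph S} (hT : G'.IsTree) {x y : S} (q : G'.Walk x y)
    (hq : q.IsPath) : P G' hT x y = q :=
  (hT.existsUnique_path x y).unique (P_isPath G' hT x y) hq

lemma treeDist_eq {G' : SimpleGraph S} (hT : G'.IsTree) (w' : Sym2 S → ℝ) {x y : S}
    (q : G'.Walk x y) (hq : q.IsPath) :
    treeDist G' hT w' x y = (q.edges.map w').sum := by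
  have : P G' hT x y = q := P_unique hT q hq
  rw [treeDist]
  rw [show (hT.existsUnique_path x y).exists.choose = P G' hT x y from rfl, this]

variable {G' : SimpleGraph S}

lemma P_self (hT : G'.IsTree) (r : S) : P G' hT r r = Walk.nil :=
  P_unique hT Walk.nil Walk.IsPath.nil

noncomputable def prnt (hT : G'.IsTree) (r v : S) : S := (P G' hT v r).getVert 1

lemma P_not_nil (hT : G'.IsTree) {r v : S} (hv : v ≠ r) : ¬ (P G' hT v r).Nil :=
  Walk.not_nil_of_ne hv

lemma adj_prnt (hT : G'.IsTree) {r v : S} (hv : v ≠ r) : G'.Adj v (prnt hT r v) :=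
  (P G' hT v r).adj_snd (P_not_nil hT hv)

lemma exists_P_cons (hT : G'.IsTree) {r v : S} (hv : v ≠ r) :
    ∃ h : G'.Adj v (prnt hT r v),
      P G' hT v r = Walk.cons h (P G' hT (prnt hT r v) r) := by
  obtain ⟨x, h, q, hq⟩ := Walk.exists_eq_cons_of_ne hv (P G' hT v r)
  have hx : prnt hT r v = x := by
    rw [prnt, hq, Walk.getVert_cons_succ, Walk.getVert_zero]
  subst hx
  have hqp : q.IsPath := by
    have := P_isPath G' hT v r
    rw [hq] at this
    exact this.of_cons
  exact ⟨h, by rw [hq, P_unique hT q hqp]⟩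

lemma sum_ite_cons (r : S) {a b : S} (h : G'.Adj a b) (q : G'.Walk b r)
    (hp : (Walk.cons h q).IsPath) (g : S → ℝ) :
    (∑ u, if u ∈ (Walk.cons h q).support ∧ u ≠ r then g u else 0)
      = g a + ∑ u, if u ∈ q.support ∧ u ≠ r then g u else 0 := by
  have har : a ∉ q.support := ((Walk.cons_isPath_iff h q).1 hp).2
  have har' : a ≠ r := fun hra => har (hra ▸ q.end_mem_support)
  rw [← Finset.add_sum_erase _ _ (Finset.mem_univ a),
    ← Finset.add_sum_erase _ (fun u => if u ∈ q.support ∧ u ≠ r then g u else 0)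
      (Finset.mem_univ a)]
  have h1 : (if a ∈ (Walk.cons h q).support ∧ a ≠ r then g a else 0) = g a := by
    simp [Walk.support_cons, har']
  have h2 : (if a ∈ q.support ∧ a ≠ r then g a else 0) = 0 := by simp [har]
  rw [h1, h2, zero_add]
  congr 1
  refine Finset.sum_congr rfl fun u hu => ?_
  have hua : u ≠ a := (Finset.mem_erase.1 hu).1
  simp [Walk.support_cons, hua]

lemma darts_sum (hT : G'.IsTree) (g : S → S → ℝ) :
    ∀ {a r : S} (q : G'.Walk a r), q.IsPath →
      (q.darts.map (fun d => g d.fst d.snd)).sum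
        = ∑ v, if v ∈ q.support ∧ v ≠ r then g v (prnt hT r v) else 0 := by
  intro a r q
  induction q with
  | nil =>
    intro _
    simp
  | @cons x y z h q ih =>
    intro hp
    have hq : q.IsPath := hp.of_cons
    have hPa : P G' hT x z = Walk.cons h q := P_unique hT _ hp
    have hprnt : prnt hT z x = y := by
      rw [prnt, hPa, Walk.getVert_cons_succ, Walk.getVert_zero]
    rw [Walk.darts_cons, List.map_cons, List.sum_cons, ih hq,
      sum_ite_cons z h q hp (fun v => g v (prnt hT z v)), hprnt]

lemma telescope (f : S → ℝ) : ∀ {a b : S} (q : G'.Walk a b),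
    f a - f b = (q.darts.map (fun d => f d.fst - f d.snd)).sum := by
  intro a b q
  induction q with
  | nil => simp
  | cons h q ih =>
    rw [Walk.darts_cons, List.map_cons, List.sum_cons, ← ih]
    simp

noncomputable def subm (hT : G'.IsTree) (r : S) (m : S → ℝ) (v : S) : ℝ :=
  ∑ p, if v ∈ (P G' hT p r).support then m p else 0

lemma identity (hT : G'.IsTree) (r : S) (m f : S → ℝ) (hm : ∑ p, m p = 0) :
    ∑ p, m p * f p
      = ∑ v ∈ Finset.univ.erase r, (f v - f (prnt hT r v)) * subm hT r m v := by
  have e1 : ∀ p : S, f p - f r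
      = ∑ v, if v ∈ (P G' hT p r).support ∧ v ≠ r then (f v - f (prnt hT r v)) else 0 := by
    intro p
    rw [telescope f (P G' hT p r)]
    exact darts_sum hT (fun v u => f v - f u) _ (P_isPath G' hT p r)
  have e2 : ∑ p, m p * f p = ∑ p, m p * (f p - f r) := by
    simp only [mul_sub]
    rw [Finset.sum_sub_distrib, ← Finset.sum_mul, hm, zero_mul, sub_zero]
  rw [e2]
  calc ∑ p, m p * (f p - f r)
      = ∑ p, ∑ v, (if v ∈ (P G' hT p r).support ∧ v ≠ r then
          m p * (f v - f (prnt hT r v)) else 0) := by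
        refine Finset.sum_congr rfl fun p _ => ?_
        rw [e1 p, Finset.mul_sum]
        exact Finset.sum_congr rfl fun v _ => by rw [mul_ite, mul_zero]
    _ = ∑ v, ∑ p, (if v ∈ (P G' hT p r).support ∧ v ≠ r then
          m p * (f v - f (prnt hT r v)) else 0) := Finset.sum_comm
    _ = ∑ v ∈ Finset.univ.erase r, (f v - f (prnt hT r v)) * subm hT r m v := by
        rw [← Finset.sum_subset (Finset.subset_univ (Finset.univ.erase r))]
        · refine Finset.sum_congr rfl fun v hv => ?_
          have hvr : v ≠ r := (Finset.mem_erase.1 hv).1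
          have : ∀ p : S, (if v ∈ (P G' hT p r).support ∧ v ≠ r then
              m p * (f v - f (prnt hT r v)) else 0)
              = (if v ∈ (P G' hT p r).support then m p else 0) * (f v - f (prnt hT r v)) := by
            intro p
            by_cases hvp : v ∈ (P G' hT p r).support <;> simp [hvp, hvr]
          rw [Finset.sum_congr rfl fun p _ => this p, ← Finset.sum_mul]
          rw [subm, mul_comm]
        · intro v _ hv
          have hvr : v = r := by
            by_contra hne
            exact hv (Finset.mem_erase.2 ⟨hne, Finset.mem_univ v⟩)
          subst hvr
          simp

lemma adj_parent (hT : G'.IsTree) (r : S) {u v : S} (h : G'.Adj u v) :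
    (u ≠ r ∧ prnt hT r u = v) ∨ (v ≠ r ∧ prnt hT r v = u) := by
  by_cases hu : u ∈ (P G' hT v r).support
  · right
    have hvr : v ≠ r := by
      rintro rfl
      rw [P_self] at hu
      simp only [Walk.support_nil, List.mem_singleton] at hu
      exact h.ne hu
    have hpath := P_isPath G' hT v r
    have htake : (P G' hT v r).takeUntil u hu = Walk.cons h.symm Walk.nil := by
      have h1 : ((P G' hT v r).takeUntil u hu).IsPath := hpath.takeUntil hu
      have h2 : (Walk.cons h.symm (Walk.nil : G'.Walk u u)).IsPath := by
        rw [Walk.cons_isPath_iff]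
        exact ⟨Walk.IsPath.nil, by simp [h.ne']⟩
      exact (hT.existsUnique_path v u).unique h1 h2
    have hdrop : (P G' hT v r).dropUntil u hu = P G' hT u r :=
      (P_unique hT _ (hpath.dropUntil hu)).symm
    have hPv : P G' hT v r = Walk.cons h.symm (P G' hT u r) := by
      conv_lhs => rw [← Walk.take_spec (P G' hT v r) hu]
      rw [htake, hdrop]
      simp
    refine ⟨hvr, ?_⟩
    rw [prnt, hPv, Walk.getVert_cons_succ, Walk.getVert_zero]
  · left
    have hur : u ≠ r := by
      intro h'
      apply hu
      rw [h']
      exact (P G' hT v r).end_mem_support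
    have hp : (Walk.cons h (P G' hT v r)).IsPath :=
      (Walk.cons_isPath_iff h _).2 ⟨P_isPath _ _ _ _, hu⟩
    have hPu : P G' hT u r = Walk.cons h (P G' hT v r) := P_unique hT _ hp
    exact ⟨hur, by rw [prnt, hPu, Walk.getVert_cons_succ, Walk.getVert_zero]⟩

lemma walk_bound (w' : Sym2 S → ℝ) (h0 : S → ℝ)
    (hstep : ∀ {u v : S}, G'.Adj u v → |h0 u - h0 v| ≤ w' s(u, v) / 8) :
    ∀ {a b : S} (q : G'.Walk a b), |h0 a - h0 b| ≤ (q.edges.map w').sum / 8 := by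
  intro a b q
  induction q with
  | nil => simp
  | @cons x y z h q ih =>
    rw [Walk.edges_cons, List.map_cons, List.sum_cons, add_div]
    calc |h0 x - h0 z| ≤ |h0 x - h0 y| + |h0 y - h0 z| := abs_sub_le _ _ _
      _ ≤ w' s(x, y) / 8 + (q.edges.map w').sum / 8 := add_le_add (hstep h) ih



theorem main {S : Type} [Fintype S] [DecidableEq S] [MetricSpace S]
    (G' : SimpleGraph S) (hT : G'.IsTree) (w' : Sym2 S → ℝ)
    (hw' : ∀ e ∈ G'.edgeSet, 0 < w' e)
    (h1 : ∀ x y : S, dist x y ≤ treeDist G' hT w' x y)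
    (h2 : ∀ x y : S, treeDist G' hT w' x y ≤ 8 * dist x y)
    (k : ℕ) (hk : Fintype.card S = k + 1) :
    ∃ T : molecules S ≃ₗ[ℝ] (Fin k → ℝ),
      ∀ m : molecules S, l1norm (T m) ≤ freeNorm S m ∧ freeNorm S m ≤ 8 * l1norm (T m) := by
  have hSne : Nonempty S := Fintype.card_pos_iff.mp (by omega)
  obtain ⟨r⟩ := hSne
  set wt : S → ℝ := fun v => w' s(v, prnt hT r v) with hwtdef
  have wt_pos : ∀ v : S, v ≠ r → 0 < wt v := fun v hv =>
    hw' _ ((G'.mem_edgeSet).2 (adj_prnt hT hv))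
  have dist_prnt : ∀ v : S, v ≠ r → treeDist G' hT w' v (prnt hT r v) = wt v := by
    intro v hv
    have hadj := adj_prnt hT (r := r) hv
    have hp : (Walk.cons hadj (Walk.nil : G'.Walk (prnt hT r v) (prnt hT r v))).IsPath := by
      rw [Walk.cons_isPath_iff]
      exact ⟨Walk.IsPath.nil, by simp [hadj.ne]⟩
    rw [treeDist_eq hT w' _ hp]
    simp
    rfl
  have dist_le_wt : ∀ v : S, v ≠ r → dist v (prnt hT r v) ≤ wt v := fun v hv =>
    (dist_prnt v hv) ▸ h1 _ _
  -- index equiv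
  have hcard : Fintype.card {v : S // v ≠ r} = k := by
    have h := Fintype.card_subtype_compl (fun v : S => v = r)
    rw [Fintype.card_subtype_eq, hk] at h
    simpa using h
  let ε : Fin k ≃ {v : S // v ≠ r} := (Fintype.equivFinOfCardEq hcard).symm
  -- subm additivity
  have subm_add : ∀ (m m' : S → ℝ) (v : S),
      subm hT r (m + m') v = subm hT r m v + subm hT r m' v := by
    intro m m' v
    rw [subm, subm, subm, ← Finset.sum_add_distrib]
    refine Finset.sum_congr rfl fun p _ => ?_
    by_cases h : v ∈ (P G' hT p r).support <;> simp [h]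
  have subm_smul : ∀ (c : ℝ) (m : S → ℝ) (v : S),
      subm hT r (c • m) v = c * subm hT r m v := by
    intro c m v
    rw [subm, subm, Finset.mul_sum]
    refine Finset.sum_congr rfl fun p _ => ?_
    by_cases h : v ∈ (P G' hT p r).support <;> simp [h]
  let L : molecules S →ₗ[ℝ] (Fin k → ℝ) :=
    { toFun := fun m i => (wt (ε i) / 8) * subm hT r (m : S → ℝ) (ε i)
      map_add' := by
        intro m m'
        funext i
        show wt (ε i) / 8 * subm hT r ((m : S → ℝ) + (m' : S → ℝ)) (ε i) = _
        rw [subm_add]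
        simp only [Pi.add_apply]
        ring
      map_smul' := by
        intro c m
        funext i
        show wt (ε i) / 8 * subm hT r (c • (m : S → ℝ)) (ε i) = _
        rw [subm_smul]
        show _ = c * (wt (ε i) / 8 * subm hT r (m : S → ℝ) (ε i))
        ring }
  have hmem : ∀ m : molecules S, ∑ p, (m : S → ℝ) p = 0 := fun m => m.2
  -- injectivity
  have hker : ∀ m : molecules S, L m = 0 → m = 0 := by
    intro m hLm
    have hsub : ∀ v : S, v ≠ r → subm hT r (m : S → ℝ) v = 0 := by
      intro v hv
      have hi := congrFun hLm (ε.symm ⟨v, hv⟩)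
      have hε : (ε (ε.symm ⟨v, hv⟩) : S) = v := by rw [Equiv.apply_symm_apply]
      simp only [L, LinearMap.coe_mk, AddHom.coe_mk, Pi.zero_apply, hε] at hi
      have hne : wt v / 8 ≠ 0 := ne_of_gt (by linarith [wt_pos v hv])
      exact (mul_eq_zero.1 hi).resolve_left hne
    apply Subtype.ext
    funext q
    have hid := identity hT r (m : S → ℝ) (fun p => if p = q then (1:ℝ) else 0) (hmem m)
    have hL : ∑ p, (m : S → ℝ) p * (if p = q then (1:ℝ) else 0) = (m : S → ℝ) q := by
      simp [mul_ite]
    rw [hL] at hid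
    rw [show ((0 : molecules S) : S → ℝ) q = 0 from rfl]
    rw [hid]
    refine Finset.sum_eq_zero fun v hv => ?_
    rw [hsub v (Finset.mem_erase.1 hv).1, mul_zero]
  have hinj : Function.Injective L := by
    intro a b hab
    have : a - b = 0 := hker _ (by rw [map_sub, hab, sub_self])
    exact sub_eq_zero.1 this
  -- dimensions
  let phi : (S → ℝ) →ₗ[ℝ] ℝ :=
    { toFun := fun g => ∑ p, g p
      map_add' := by intro a b; simp [Finset.sum_add_distrib]
      map_smul' := by intro c a; simp [Finset.mul_sum] }
  have hphisurj : Function.Surjective phi := by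
    intro c
    refine ⟨fun p => if p = r then c else 0, ?_⟩
    simp [phi, Finset.sum_ite_eq']
  have hmol : molecules S = LinearMap.ker phi := by
    ext g
    simp [molecules, phi, LinearMap.mem_ker]
  have hdim : Module.finrank ℝ (molecules S) = k := by
    have h3 := LinearMap.finrank_range_add_finrank_ker phi
    rw [LinearMap.range_eq_top.2 hphisurj, finrank_top, Module.finrank_self,
      Module.finrank_pi, hk] at h3
    rw [hmol]
    omega
  have hdim2 : Module.finrank ℝ (Fin k → ℝ) = k := by
    rw [Module.finrank_pi, Fintype.card_fin]
  let T := L.linearEquivOfInjective hinj (by rw [hdim, hdim2])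
  refine ⟨T, fun m => ?_⟩
  have hTm : T m = L m := LinearMap.linearEquivOfInjective_apply hinj (by rw [hdim, hdim2]) m
  -- the bound B
  set B : ℝ := ∑ v ∈ Finset.univ.erase r, wt v * |subm hT r (m : S → ℝ) v| with hBdef
  have hBnonneg : 0 ≤ B := Finset.sum_nonneg fun v hv =>
    mul_nonneg (le_of_lt (wt_pos v (Finset.mem_erase.1 hv).1)) (abs_nonneg _)
  -- l1norm = B / 8
  have l1_eq : l1norm (L m) = B / 8 := by
    rw [l1norm]
    have hterm : ∀ i : Fin k, |L m i|
        = (fun x : {v : S // v ≠ r} => wt x * |subm hT r (m : S → ℝ) x| / 8) (ε i) := by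
      intro i
      show |wt (ε i) / 8 * subm hT r (m : S → ℝ) (ε i)| = _
      rw [abs_mul, abs_of_nonneg (by linarith [wt_pos (ε i : S) (ε i).2] : (0:ℝ) ≤ wt (ε i) / 8)]
      ring
    rw [Fintype.sum_equiv ε (fun i => |L m i|)
      (fun x : {v : S // v ≠ r} => wt x * |subm hT r (m : S → ℝ) x| / 8) hterm]
    rw [← Finset.sum_div]
    congr 1
    rw [hBdef]
    rw [Finset.sum_subtype (Finset.univ.erase r)
      (p := fun v : S => v ≠ r) (by simp) (fun v => wt v * |subm hT r (m : S → ℝ) v|)]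
  -- upper bound on elements of the sup set
  set A : Set ℝ :=
    {x : ℝ | ∃ f : S → ℝ, LipschitzWith 1 f ∧ x = ∑ p, (m : S → ℝ) p * f p} with hAdef
  have hfree : freeNorm S (m : S → ℝ) = sSup A := rfl
  have hub : ∀ x ∈ A, x ≤ B := by
    rintro x ⟨f, hf, rfl⟩
    rw [identity hT r (m : S → ℝ) f (hmem m), hBdef]
    refine Finset.sum_le_sum fun v hv => ?_
    have hvr : v ≠ r := (Finset.mem_erase.1 hv).1
    have hlipf : |f v - f (prnt hT r v)| ≤ wt v := by
      have := hf.dist_le_mul v (prnt hT r v)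
      simp only [NNReal.coe_one, one_mul, Real.dist_eq] at this
      exact this.trans (dist_le_wt v hvr)
    calc (f v - f (prnt hT r v)) * subm hT r (m : S → ℝ) v
        ≤ |(f v - f (prnt hT r v)) * subm hT r (m : S → ℝ) v| := le_abs_self _
      _ = |f v - f (prnt hT r v)| * |subm hT r (m : S → ℝ) v| := abs_mul _ _
      _ ≤ wt v * |subm hT r (m : S → ℝ) v| :=
          mul_le_mul_of_nonneg_right hlipf (abs_nonneg _)
  have hA0 : A.Nonempty := ⟨0, fun _ => 0, LipschitzWith.const' 0, by simp⟩
  have hbdd : BddAbove A := ⟨B, hub⟩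
  -- the witness function h0
  set sg : S → ℝ := fun v => if 0 ≤ subm hT r (m : S → ℝ) v then 1 else -1 with hsgdef
  have hsg : ∀ v, sg v * subm hT r (m : S → ℝ) v = |subm hT r (m : S → ℝ) v| := by
    intro v
    by_cases h : 0 ≤ subm hT r (m : S → ℝ) v
    · simp [hsgdef, h, abs_of_nonneg h]
    · simp [hsgdef, h, abs_of_neg (lt_of_not_ge h)]
  have hsgabs : ∀ v, |sg v| = 1 := by
    intro v
    by_cases h : 0 ≤ subm hT r (m : S → ℝ) v <;> simp [hsgdef, h]
  set g0 : S → ℝ := fun u => sg u * wt u / 8 with hg0def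
  set h0 : S → ℝ := fun p => ∑ u, if u ∈ (P G' hT p r).support ∧ u ≠ r then g0 u else 0
    with hh0def
  have hstep : ∀ v : S, v ≠ r → h0 v = g0 v + h0 (prnt hT r v) := by
    intro v hv
    obtain ⟨h, hP⟩ := exists_P_cons hT hv
    have hp : (Walk.cons h (P G' hT (prnt hT r v) r)).IsPath := hP ▸ P_isPath G' hT v r
    show (∑ u, if u ∈ (P G' hT v r).support ∧ u ≠ r then g0 u else 0) = _
    rw [hP]
    exact sum_ite_cons r h _ hp g0
  have hg0abs : ∀ v : S, v ≠ r → |g0 v| = wt v / 8 := by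
    intro v hv
    rw [hg0def]
    show |sg v * wt v / 8| = wt v / 8
    rw [abs_div, abs_mul, hsgabs, one_mul, abs_of_pos (wt_pos v hv)]
    simp
  have hadjb : ∀ {u v : S}, G'.Adj u v → |h0 u - h0 v| ≤ w' s(u, v) / 8 := by
    intro u v h
    rcases adj_parent hT r h with ⟨hur, hpu⟩ | ⟨hvr, hpv⟩
    · have : h0 u - h0 v = g0 u := by rw [hstep u hur, hpu]; ring
      rw [this, hg0abs u hur, hwtdef]
      simp only
      rw [hpu]
    · have : h0 u - h0 v = -(g0 v) := by rw [hstep v hvr, hpv]; ring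
      rw [this, abs_neg, hg0abs v hvr, hwtdef]
      simp only
      rw [hpv, Sym2.eq_swap]
  have hlip : LipschitzWith 1 h0 := by
    apply LipschitzWith.of_dist_le_mul
    intro x y
    simp only [NNReal.coe_one, one_mul, Real.dist_eq]
    have hwalk := walk_bound w' h0 hadjb (P G' hT x y)
    have heq : ((P G' hT x y).edges.map w').sum = treeDist G' hT w' x y :=
      (treeDist_eq hT w' _ (P_isPath G' hT x y)).symm
    rw [heq] at hwalk
    calc |h0 x - h0 y| ≤ treeDist G' hT w' x y / 8 := hwalk
      _ ≤ 8 * dist x y / 8 := by linarith [h2 x y]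
      _ = dist x y := by ring
  have hval : ∑ p, (m : S → ℝ) p * h0 p = B / 8 := by
    rw [identity hT r (m : S → ℝ) h0 (hmem m), hBdef, Finset.sum_div]
    refine Finset.sum_congr rfl fun v hv => ?_
    have hvr : v ≠ r := (Finset.mem_erase.1 hv).1
    have hd : h0 v - h0 (prnt hT r v) = g0 v := by rw [hstep v hvr]; ring
    rw [hd, hg0def]
    show sg v * wt v / 8 * subm hT r (m : S → ℝ) v = _
    rw [show sg v * wt v / 8 * subm hT r (m : S → ℝ) v
        = wt v * (sg v * subm hT r (m : S → ℝ) v) / 8 by ring, hsg]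
  have hin : B / 8 ∈ A := ⟨h0, hlip, hval.symm⟩
  constructor
  · rw [hTm, l1_eq, hfree]
    exact le_csSup hbdd hin
  · rw [hTm, l1_eq, hfree]
    have := csSup_le hA0 hub
    linarith

end TreeAux

/-- assuming Gupta's theorem (every subset of a finite positively weighted
tree carries a tree metric `8`-equivalent to the induced one), for every finite subset `M`
of a weighted tree, with the induced metric, the Banach–Mazur distance between `F(M)`
and `ℓ₁^{|M|-1}` is at most `8`. -/
theorem stmt1
    (gupta : ∀ (V : Type) [Fintype V] [DecidableEq V] (G : SimpleGraph V) (hG : G.IsTree)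
      (w : Sym2 V → ℝ), (∀ e ∈ G.edgeSet, 0 < w e) → ∀ S : Finset V,
      ∃ (G' : SimpleGraph S) (hG' : G'.IsTree) (w' : Sym2 S → ℝ),
        (∀ e ∈ G'.edgeSet, 0 < w' e) ∧
        ∀ x y : S, treeDist G hG w (x : V) (y : V) ≤ treeDist G' hG' w' x y ∧
          treeDist G' hG' w' x y ≤ 8 * treeDist G hG w (x : V) (y : V))
    {V : Type} [Fintype V] [DecidableEq V] (G : SimpleGraph V) (hG : G.IsTree)
    (w : Sym2 V → ℝ) (hw : ∀ e ∈ G.edgeSet, 0 < w e)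
    (M : Finset V) (hne : M.Nonempty) [MetricSpace M]
    (hdist : ∀ x y : M, dist x y = treeDist G hG w (x : V) (y : V)) :
    ∃ T : molecules M ≃ₗ[ℝ] (Fin (M.card - 1) → ℝ),
      ∀ m : molecules M, l1norm (T m) ≤ freeNorm M m ∧ freeNorm M m ≤ 8 * l1norm (T m) := by
  obtain ⟨G', hG', w', hw', hcmp⟩ := gupta V G hG w hw M
  have h1 : ∀ x y : ↥M, dist x y ≤ treeDist G' hG' w' x y := fun x y => by
    rw [hdist]; exact (hcmp x y).1
  have h2 : ∀ x y : ↥M, treeDist G' hG' w' x y ≤ 8 * dist x y := fun x y => by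
    rw [hdist]; exact (hcmp x y).2
  have hk : Fintype.card ↥M = (M.card - 1) + 1 := by
    rw [Fintype.card_coe]
    have := hne.card_pos
    omega
  exact TreeAux.main G' hG' w' hw' h1 h2 _ hk
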